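/- A ring R is CCR if and only if for every simple left R-module M and every r ∈ R, the element r acts on M as a finite rank operator over the division ring D = End_R(M); that is, the D-submodule of M generated by the set r•M = {r•m : m ∈ M} is a finitely generated D-module. -/

import Mathlib

universe u

open Function Submodule

/-! ### Auxiliary lemmas -/

/-- Over a division ring, a submodule of a finitely generated submodule is finitely
generated. -/
private theorem fg_of_le_fg {D N : Type*} [DivisionRing D] [AddCommGroup N] [Module D N]
    {p p' : Submodule D N} (h : p ≤ p') (h' : p'.FG) : p.FG := by
  haveI : Module.Finite D p' := Module.Finite.iff_fg.mpr h'
  have hfg := (IsNoetherian.noetherian (p.comap p'.subtype)).map p'.subtype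
  rwa [Submodule.map_comap_subtype, inf_eq_right.mpr h] at hfg

section Density

variable {Q M : Type*} [Ring Q] [AddCommGroup M] [Module Q M]

/-- The set of elements killed by `r : Q`, as a submodule over `Module.End Q M`. -/
private def killerSub (r : Q) : Submodule (Module.End Q M) M where
  carrier := {x | r • x = 0}
  add_mem' := fun {x y} hx hy => by
    show r • (x + y) = 0
    rw [smul_add, hx, hy, add_zero]
  zero_mem' := smul_zero r
  smul_mem' := fun d x hx => by
    show r • (d x) = 0
    rw [← d.map_smul, show r • x = 0 from hx, map_zero]

/-- The action of `Q` on `M` as a ring homomorphism into `Module.End (Module.End Q M) M`. -/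
private def actHom (Q M : Type*) [Ring Q] [AddCommGroup M] [Module Q M] :
    Q →+* Module.End (Module.End Q M) M where
  toFun q :=
    { toFun := fun x => q • x
      map_add' := fun x y => smul_add q x y
      map_smul' := fun d x => show q • (d x) = d (q • x) from (d.map_smul q x).symm }
  map_one' := LinearMap.ext fun x => one_smul Q x
  map_mul' q q' := LinearMap.ext fun x => mul_smul q q' x
  map_zero' := LinearMap.ext fun x => zero_smul Q x
  map_add' q q' := LinearMap.ext fun x => add_smul q q' x

/-- Key step in the Jacobson density theorem: for a finite set `s` and an element `m` outside
of the `D`-span of `s` (where `D = End Q M`), there is `r : Q` killing the span of `s` but not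
killing `m`. -/
private theorem exists_annihilating [IsSimpleModule Q M] (s : Finset M) :
    ∀ m : M, m ∉ span (Module.End Q M) (s : Set M) →
      ∃ r : Q, (∀ x ∈ span (Module.End Q M) (s : Set M), r • x = 0) ∧ r • m ≠ 0 := by
  classical
  induction s using Finset.induction_on with
  | empty =>
    intro m hm
    refine ⟨1, fun x hx => ?_, ?_⟩
    · rw [Finset.coe_empty, span_empty, mem_bot] at hx
      rw [hx, smul_zero]
    · rw [one_smul]
      intro h
      exact hm (by rw [h]; exact zero_mem _)
  | @insert w s hws ih =>
    intro m hm
    rw [Finset.coe_insert] at hm ⊢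
    by_cases hw : w ∈ span (Module.End Q M) (s : Set M)
    · rw [span_insert_eq_span hw] at hm ⊢
      exact ih m hm
    · by_contra hcon
      push_neg at hcon
      set W₀ := span (Module.End Q M) (s : Set M) with hW₀def
      let A : Submodule Q Q :=
        { carrier := {r : Q | ∀ x ∈ W₀, r • x = 0}
          add_mem' := fun {a b} ha hb x hx => by rw [add_smul, ha x hx, hb x hx, add_zero]
          zero_mem' := fun x _ => zero_smul Q x
          smul_mem' := fun c r hr x hx => by
            rw [smul_eq_mul, mul_smul, hr x hx, smul_zero] }
      obtain ⟨r₀, hr₀, hr₀w⟩ := ih w hw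
      let φ : A →ₗ[Q] M :=
        { toFun := fun a => (a : Q) • w
          map_add' := fun a b => add_smul _ _ _
          map_smul' := fun q a => mul_smul _ _ _ }
      have hφsurj : Surjective φ := by
        have hne : LinearMap.range φ ≠ ⊥ := by
          intro hbot
          apply hr₀w
          have hmem : φ ⟨r₀, hr₀⟩ ∈ LinearMap.range φ := LinearMap.mem_range_self _ _
          rw [hbot, mem_bot] at hmem
          exact hmem
        rw [← LinearMap.range_eq_top]
        exact (eq_bot_or_eq_top _).resolve_left hne
      have hkill : ∀ a : A, (a : Q) • w = 0 →
          ∀ x ∈ span (Module.End Q M) (insert w (s : Set M)), (a : Q) • x = 0 := by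
        intro a haw x hx
        have hle : span (Module.End Q M) (insert w (s : Set M)) ≤ killerSub (a : Q) := by
          rw [span_le]
          rintro y hy
          rcases Set.mem_insert_iff.mp hy with rfl | hy
          · exact haw
          · exact a.2 y (subset_span hy)
        exact hle hx
      let ψ : A →ₗ[Q] M :=
        { toFun := fun a => (a : Q) • m
          map_add' := fun a b => add_smul _ _ _
          map_smul' := fun q a => mul_smul _ _ _ }
      have hker : LinearMap.ker φ ≤ LinearMap.ker ψ := by
        rintro a ha
        have haw : (a : Q) • w = 0 := ha
        exact hcon (a : Q) (hkill a haw)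
      let e := φ.quotKerEquivOfSurjective hφsurj
      let f : M →ₗ[Q] M := ((LinearMap.ker φ).liftQ ψ hker).comp (e.symm : M →ₗ[Q] _)
      have hf : ∀ a : A, f ((a : Q) • w) = (a : Q) • m := by
        intro a
        have h1 : e ((LinearMap.ker φ).mkQ a) = φ a := rfl
        have h2 : e.symm (φ a) = (LinearMap.ker φ).mkQ a := by
          rw [← h1, LinearEquiv.symm_apply_apply]
        show ((LinearMap.ker φ).liftQ ψ hker) (e.symm ((a : Q) • w)) = _
        rw [show ((a : Q) • w) = φ a from rfl, h2]
        exact Submodule.liftQ_apply _ _ _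
      have hfm : ∀ a : Q, a ∈ A → a • (f w - m) = 0 := by
        intro a ha
        have h3 : a • f w = f (a • w) := (f.map_smul a w).symm
        rw [smul_sub, h3, hf ⟨a, ha⟩, sub_self]
      have hWmem : f w - m ∈ W₀ := by
        by_contra hnot
        obtain ⟨r, hr1, hr2⟩ := ih (f w - m) hnot
        exact hr2 (hfm r hr1)
      apply hm
      have hw' : w ∈ span (Module.End Q M) (insert w (s : Set M)) :=
        subset_span (Set.mem_insert _ _)
      have h1 : f w ∈ span (Module.End Q M) (insert w (s : Set M)) :=
        (span (Module.End Q M) (insert w (s : Set M))).smul_mem f hw'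
      have h2 : f w - m ∈ span (Module.End Q M) (insert w (s : Set M)) :=
        span_mono (Set.subset_insert _ _) hWmem
      have h3 := sub_mem h1 h2
      simpa using h3

/-- On a finite set, a `D`-linear endomorphism of `M` agrees with the action of some element
of `Q`. -/
private theorem exists_agree [IsSimpleModule Q M] (s : Finset M)
    (T : Module.End (Module.End Q M) M) :
    ∃ q : Q, ∀ x ∈ s, q • x = T x := by
  classical
  induction s using Finset.induction_on with
  | empty => exact ⟨0, by simp⟩
  | @insert w s hws ih =>
    obtain ⟨q₀, hq₀⟩ := ih
    by_cases hw : w ∈ span (Module.End Q M) (s : Set M)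
    · refine ⟨q₀, fun x hx => ?_⟩
      rcases Finset.mem_insert.mp hx with rfl | hx
      · have hker : span (Module.End Q M) (s : Set M) ≤
            LinearMap.ker (T - actHom Q M q₀) := by
          rw [span_le]
          intro y hy
          simp only [SetLike.mem_coe, LinearMap.mem_ker, LinearMap.sub_apply]
          rw [show (actHom Q M q₀) y = q₀ • y from rfl, hq₀ y hy, sub_self]
        have hx0 := hker hw
        rw [LinearMap.mem_ker, LinearMap.sub_apply, sub_eq_zero] at hx0
        rw [hx0]
        rfl
      · exact hq₀ x hx
    · obtain ⟨r, hr, hrw⟩ := exists_annihilating s w hw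
      obtain ⟨q₂, hq₂⟩ : ∃ q₂ : Q, q₂ • (r • w) = T w - q₀ • w := by
        have htop : (T w - q₀ • w) ∈ (⊤ : Submodule Q M) := trivial
        rw [← IsSimpleModule.span_singleton_eq_top Q hrw, mem_span_singleton] at htop
        exact htop
      refine ⟨q₀ + q₂ * r, fun x hx => ?_⟩
      rcases Finset.mem_insert.mp hx with rfl | hx
      · rw [add_smul, mul_smul, hq₂, add_sub_cancel]
      · have hrx : r • x = 0 := hr x (subset_span hx)
        rw [add_smul, mul_smul, hrx, smul_zero, add_zero, hq₀ x hx]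

/-- The finite-dimensional Jacobson density theorem: if `M` is finitely generated over
`D = End Q M` then the action map `Q → End D M` is bijective. -/
private theorem actHom_bijective [IsSimpleModule Q M] [FaithfulSMul Q M]
    (hfin : (⊤ : Submodule (Module.End Q M) M).FG) :
    Bijective (actHom Q M) := by
  constructor
  · intro a b h
    refine eq_of_smul_eq_smul (α := M) fun m => ?_
    exact congrFun (congrArg (fun (g : Module.End (Module.End Q M) M) => g.toFun) h) m
  · intro T
    obtain ⟨s, hs⟩ := hfin
    obtain ⟨q, hq⟩ := exists_agree s T
    refine ⟨q, ?_⟩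
    have hker : span (Module.End Q M) (s : Set M) ≤ LinearMap.ker (actHom Q M q - T) := by
      rw [span_le]
      intro y hy
      simp only [SetLike.mem_coe, LinearMap.mem_ker, LinearMap.sub_apply]
      rw [show (actHom Q M q) y = q • y from rfl, hq y hy, sub_self]
    rw [hs] at hker
    have hz : actHom Q M q - T = 0 := by
      apply LinearMap.ext
      intro x
      have hx := hker (mem_top (x := x))
      rw [LinearMap.mem_ker] at hx
      simpa using hx
    exact sub_eq_zero.mp hz

end Density

/-! ### The given definitions -/

/-- A ring is (left) primitive if it admits a faithful simple left module. -/
def IsPrimitiveRing (R : Type u) [Ring R] : Prop :=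
  ∃ (M : Type u) (_ : AddCommGroup M) (_ : Module R M), IsSimpleModule R M ∧ FaithfulSMul R M

/-- A ring has a minimal left ideal if there is an atom in its lattice of left ideals. -/
def HasMinimalLeftIdeal (R : Type u) [Ring R] : Prop :=
  ∃ L : Submodule R R, IsAtom L

/-- A ring is CCR if every primitive quotient is a simple ring with a minimal left ideal. -/
def IsCCRRing (R : Type u) [Ring R] : Prop :=
  ∀ P : TwoSidedIdeal R, IsPrimitiveRing P.ringCon.Quotient →
    IsSimpleRing P.ringCon.Quotient ∧ HasMinimalLeftIdeal P.ringCon.Quotient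

/-! ### Endomorphism rings of finite-dimensional modules over division rings -/

section EndDiv
variable {D M : Type u} [DivisionRing D] [AddCommGroup M] [Module D M]

private theorem exists_linearMap_apply_eq {v : M} (hv : v ≠ 0) (v' : M) :
    ∃ S : Module.End D M, S v = v' := by
  obtain ⟨W, hW⟩ := Submodule.exists_isCompl (span D {v})
  let π := Submodule.linearProjOfIsCompl _ W hW
  let c : (span D ({v} : Set M)) →ₗ[D] D := (LinearEquiv.coord D M v hv : _ →ₗ[D] D)
  refine ⟨(LinearMap.toSpanSingleton D M v').comp (c.comp π), ?_⟩
  have h1 : π v = ⟨v, mem_span_singleton_self v⟩ :=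
    Submodule.linearProjOfIsCompl_apply_left hW ⟨v, mem_span_singleton_self v⟩
  have h2 : c ⟨v, mem_span_singleton_self v⟩ = 1 := LinearEquiv.coord_self D M v hv
  show LinearMap.toSpanSingleton D M v' (c (π v)) = v'
  rw [h1, h2, LinearMap.toSpanSingleton_apply_one]

private theorem end_isSimpleRing [Module.Finite D M] [Nontrivial M] :
    IsSimpleRing (Module.End D M) := by
  classical
  obtain ⟨x₀, hx₀⟩ := exists_ne (0 : M)
  haveI : Nontrivial (Module.End D M) := by
    refine ⟨0, 1, fun h => hx₀ ?_⟩
    have hx := LinearMap.congr_fun h x₀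
    simpa using hx.symm
  refine IsSimpleRing.of_eq_bot_or_eq_top fun I => ?_
  rw [or_iff_not_imp_left, ← I.one_mem_iff]
  intro hne
  obtain ⟨T₁, hT₁I, hT₁ : T₁ ≠ 0⟩ := SetLike.exists_of_lt (bot_lt_iff_ne_bot.mpr hne : ⊥ < I)
  obtain ⟨v₀, hv₀⟩ : ∃ v₀, T₁ v₀ ≠ 0 := by
    by_contra hcon
    push_neg at hcon
    exact hT₁ (LinearMap.ext fun x => by rw [hcon x, LinearMap.zero_apply])
  let b := Module.Free.chooseBasis D M
  have hsum : (1 : Module.End D M) =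
      ∑ i, (LinearMap.toSpanSingleton D M (b i)).comp (b.coord i) := by
    apply LinearMap.ext
    intro x
    rw [LinearMap.sum_apply]
    simp only [LinearMap.coe_comp, comp_apply, Module.Basis.coord_apply, LinearMap.toSpanSingleton_apply]
    exact (b.sum_repr x).symm
  rw [hsum]
  refine sum_mem fun i _ => ?_
  obtain ⟨A, hA⟩ := exists_linearMap_apply_eq (D := D) hv₀ (b i)
  have heq : (LinearMap.toSpanSingleton D M (b i)).comp (b.coord i) =
      A * T₁ * ((LinearMap.toSpanSingleton D M v₀).comp (b.coord i)) := by
    apply LinearMap.ext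
    intro x
    show (b.repr x i) • (b i) = A (T₁ ((b.repr x i) • v₀))
    rw [map_smul, map_smul, hA]
  rw [heq]
  exact I.mul_mem_right _ _ (I.mul_mem_left _ _ hT₁I)

private theorem end_hasMinimalLeftIdeal [Nontrivial M] :
    HasMinimalLeftIdeal (Module.End D M) := by
  classical
  obtain ⟨m₀, hm₀⟩ := exists_ne (0 : M)
  obtain ⟨W, hW⟩ := Submodule.exists_isCompl (span D {m₀})
  let L : Submodule (Module.End D M) (Module.End D M) :=
    { carrier := {T : Module.End D M | ∀ x ∈ W, T x = 0}
      add_mem' := fun {S T} hS hT x hx => by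
        show S x + T x = 0
        rw [hS x hx, hT x hx, add_zero]
      zero_mem' := fun x _ => rfl
      smul_mem' := fun S T hT x hx => by
        show S (T x) = 0
        rw [hT x hx, map_zero] }
  have hmemL : ∀ T : Module.End D M, T ∈ L ↔ ∀ x ∈ W, T x = 0 := fun _ => Iff.rfl
  have hL0 : L ≠ ⊥ := by
    rw [Submodule.ne_bot_iff]
    refine ⟨(span D ({m₀} : Set M)).subtype.comp
        ((Submodule.projectionOnto _ W hW : M →ₗ[D] span D ({m₀} : Set M))), ?_, ?_⟩
    · intro x hx
      show ((span D ({m₀} : Set M)).subtype)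
          ((Submodule.projectionOnto _ W hW : M →ₗ[D] _) x) = 0
      rw [Submodule.projectionOnto_apply_right hW ⟨x, hx⟩]
      · rfl
    · intro h0
      apply hm₀
      have hm := LinearMap.congr_fun h0 m₀
      simp only [LinearMap.comp_apply] at hm
      rw [show (Submodule.projectionOnto _ W hW : M →ₗ[D] _) m₀ =
          ⟨m₀, mem_span_singleton_self m₀⟩ from
          Submodule.projectionOnto_apply_left hW ⟨m₀, mem_span_singleton_self m₀⟩] at hm
      simpa using hm
  refine ⟨L, hL0, fun b hb => ?_⟩
  by_contra hbne
  obtain ⟨T, hTb, hT : T ≠ 0⟩ := Submodule.ne_bot_iff b |>.mp hbne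
  have hTL : T ∈ L := hb.le hTb
  have hv : T m₀ ≠ 0 := by
    intro h0
    apply hT
    apply LinearMap.ext
    intro x
    have hker : (⊤ : Submodule D M) ≤ LinearMap.ker T := by
      rw [← hW.sup_eq_top]
      refine sup_le ?_ ?_
      · rw [span_le, Set.singleton_subset_iff]
        exact LinearMap.mem_ker.mpr h0
      · intro y hy
        exact LinearMap.mem_ker.mpr (hTL y hy)
    have hx := hker (mem_top (x := x))
    simpa using hx
  apply hb.ne
  refine le_antisymm hb.le fun T' hT' => ?_
  obtain ⟨S, hS⟩ := exists_linearMap_apply_eq (D := D) hv (T' m₀)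
  have hST : S * T = T' := by
    apply LinearMap.ext
    intro x
    have hker : (⊤ : Submodule D M) ≤ LinearMap.ker (S * T - T') := by
      rw [← hW.sup_eq_top]
      refine sup_le ?_ ?_
      · rw [span_le, Set.singleton_subset_iff]
        refine LinearMap.mem_ker.mpr ?_
        show S (T m₀) - T' m₀ = 0
        rw [hS, sub_self]
      · intro y hy
        refine LinearMap.mem_ker.mpr ?_
        show S (T y) - T' y = 0
        rw [hTL y hy, hT' y hy, map_zero, sub_zero]
    have hx := hker (mem_top (x := x))
    rw [LinearMap.mem_ker, LinearMap.sub_apply, sub_eq_zero] at hx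
    exact hx
  rw [← hST]
  exact b.smul_mem S hTb

end EndDiv
section Equiv
variable {A B : Type u} [Ring A] [Ring B]

private theorem isSimpleRing_of_ringEquiv (e : A ≃+* B) [IsSimpleRing B] : IsSimpleRing A := by
  haveI : Nontrivial A := e.toEquiv.nontrivial
  refine IsSimpleRing.of_eq_bot_or_eq_top fun I => ?_
  have hmem : ∀ x : A, x ∈ I ↔ e x ∈ I.comap (e.symm : B →+* A) := by
    intro x
    rw [TwoSidedIdeal.mem_comap]
    rw [show (e.symm : B →+* A) (e x) = x from e.symm_apply_apply x]
  rcases eq_bot_or_eq_top (I.comap (e.symm : B →+* A)) with h | h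
  · left
    refine SetLike.ext fun x => ?_
    rw [hmem x, h, TwoSidedIdeal.mem_bot, TwoSidedIdeal.mem_bot]
    rw [show (0 : B) = e 0 by rw [map_zero]]
    exact ⟨fun hx => e.injective hx, fun hx => by rw [hx]⟩
  · right
    refine SetLike.ext fun x => ?_
    rw [hmem x, h]
    exact ⟨fun _ => TwoSidedIdeal.mem_top _, fun _ => TwoSidedIdeal.mem_top _⟩

private theorem hasMinimalLeftIdeal_of_ringEquiv (e : A ≃+* B) (h : HasMinimalLeftIdeal B) :
    HasMinimalLeftIdeal A := by
  obtain ⟨L, hL0, hLmin⟩ := h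
  let L' : Submodule A A :=
    { carrier := {x : A | e x ∈ L}
      add_mem' := fun {x y} hx hy => by show e (x + y) ∈ L; rw [map_add]; exact L.add_mem hx hy
      zero_mem' := by show e 0 ∈ L; rw [map_zero]; exact L.zero_mem
      smul_mem' := fun c x hx => by
        show e (c * x) ∈ L
        rw [map_mul]
        exact L.smul_mem (e c) hx }
  refine ⟨L', ?_, ?_⟩
  · obtain ⟨y, hyL, hy0⟩ := Submodule.ne_bot_iff L |>.mp hL0
    rw [Submodule.ne_bot_iff]
    refine ⟨e.symm y, ?_, fun h0 => hy0 ?_⟩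
    · show e (e.symm y) ∈ L
      rw [RingEquiv.apply_symm_apply]
      exact hyL
    · rw [← e.apply_symm_apply y, h0, map_zero]
  · intro b hb
    let b'' : Submodule B B :=
      { carrier := {y : B | e.symm y ∈ b}
        add_mem' := fun {x y} hx hy => by
          show e.symm (x + y) ∈ b; rw [map_add]; exact b.add_mem hx hy
        zero_mem' := by show e.symm 0 ∈ b; rw [map_zero]; exact b.zero_mem
        smul_mem' := fun c x hx => by
          show e.symm (c * x) ∈ b
          rw [map_mul]
          exact b.smul_mem (e.symm c) hx }
    have hb''L : b'' < L := by
      constructor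
      · intro y hy
        have h1 : e.symm y ∈ b := hy
        have h2 : e.symm y ∈ L' := hb.le h1
        have : e (e.symm y) ∈ L := h2
        rwa [RingEquiv.apply_symm_apply] at this
      · intro hLe
        refine hb.ne ?_
        refine le_antisymm hb.le fun x hx => ?_
        have h1 : e x ∈ b'' := hLe hx
        have : e.symm (e x) ∈ b := h1
        rwa [RingEquiv.symm_apply_apply] at this
    have hbot := hLmin b'' hb''L
    rw [eq_bot_iff]
    intro x hx
    have h1 : e x ∈ b'' := by
      show e.symm (e x) ∈ b
      rwa [RingEquiv.symm_apply_apply]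
    rw [hbot] at h1
    have : e x = 0 := h1
    have hx0 : x = 0 := by
      have := e.injective (by rw [this, map_zero] : e x = e 0)
      exact this
    rw [hx0]; exact (Submodule.zero_mem ⊥)
end Equiv
section Transfer
variable {R Q M : Type*} [Ring R] [Ring Q] [AddCommGroup M]
variable [Module Q M] [Module R M]

/-- Transfer simplicity along a compatible surjective ring hom, from the base ring to the
quotient. -/
private theorem isSimpleModule_QtoR (f : R →+* Q) (hf : Surjective f)
    (hc : ∀ (r : R) (m : M), f r • m = r • m) [IsSimpleModule Q M] : IsSimpleModule R M := by
  haveI : Nontrivial M := IsSimpleModule.nontrivial Q M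
  haveI : Nontrivial (Submodule R M) := by
    refine ⟨⊥, ⊤, fun h => ?_⟩
    obtain ⟨x, hx⟩ := exists_ne (0 : M)
    exact hx (by rw [← Submodule.mem_bot (R := R), h]; trivial)
  refine { eq_bot_or_eq_top := fun N => ?_ }
  let N' : Submodule Q M :=
    { carrier := N
      add_mem' := fun hx hy => N.add_mem hx hy
      zero_mem' := N.zero_mem
      smul_mem' := fun q x hx => by
        obtain ⟨r, rfl⟩ := hf q
        rw [hc r x]
        exact N.smul_mem r hx }
  rcases eq_bot_or_eq_top N' with h | h
  · left
    rw [eq_bot_iff]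
    intro x hx
    have : x ∈ N' := hx
    rw [h] at this
    exact this
  · right
    rw [eq_top_iff]
    intro x _
    show x ∈ N'
    rw [h]
    trivial

private theorem isSimpleModule_RtoQ (f : R →+* Q)
    (hc : ∀ (r : R) (m : M), f r • m = r • m) [IsSimpleModule R M] : IsSimpleModule Q M := by
  haveI : Nontrivial M := IsSimpleModule.nontrivial R M
  haveI : Nontrivial (Submodule Q M) := by
    refine ⟨⊥, ⊤, fun h => ?_⟩
    obtain ⟨x, hx⟩ := exists_ne (0 : M)
    exact hx (by rw [← Submodule.mem_bot (R := Q), h]; trivial)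
  refine { eq_bot_or_eq_top := fun N => ?_ }
  let N' : Submodule R M :=
    { carrier := N
      add_mem' := fun hx hy => N.add_mem hx hy
      zero_mem' := N.zero_mem
      smul_mem' := fun r x hx => by
        rw [← hc r x]
        exact N.smul_mem (f r) hx }
  rcases eq_bot_or_eq_top N' with h | h
  · left
    rw [eq_bot_iff]
    intro x hx
    have : x ∈ N' := hx
    rw [h] at this
    exact this
  · right
    rw [eq_top_iff]
    intro x _
    show x ∈ N'
    rw [h]
    trivial

/-- The spans over the two endomorphism rings agree. -/
private theorem span_end_coe_eq (f : R →+* Q) (hf : Surjective f)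
    (hc : ∀ (r : R) (m : M), f r • m = r • m) (S : Set M) :
    (span (Module.End Q M) S : Set M) = (span (Module.End R M) S : Set M) := by
  apply subset_antisymm
  · let N : Submodule (Module.End Q M) M :=
      { carrier := span (Module.End R M) S
        add_mem' := fun hx hy => add_mem hx hy
        zero_mem' := zero_mem _
        smul_mem' := fun g x hx => by
          let g' : Module.End R M :=
            { toFun := g
              map_add' := g.map_add
              map_smul' := fun r m => by
                show g (r • m) = r • g m
                rw [← hc r m, g.map_smul, hc] }
          exact (span (Module.End R M) S).smul_mem g' hx }
    show (span (Module.End Q M) S : Set M) ⊆ (N : Set M)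
    exact span_le.mpr subset_span
  · let N : Submodule (Module.End R M) M :=
      { carrier := span (Module.End Q M) S
        add_mem' := fun hx hy => add_mem hx hy
        zero_mem' := zero_mem _
        smul_mem' := fun g x hx => by
          let g' : Module.End Q M :=
            { toFun := g
              map_add' := g.map_add
              map_smul' := fun q m => by
                obtain ⟨r, rfl⟩ := hf q
                show g (f r • m) = f r • g m
                rw [hc r m, g.map_smul, ← hc] }
          exact (span (Module.End Q M) S).smul_mem g' hx }
    show (span (Module.End R M) S : Set M) ⊆ (N : Set M)
    exact span_le.mpr subset_span

private theorem fg_RtoQ (f : R →+* Q) (hf : Surjective f)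
    (hc : ∀ (r : R) (m : M), f r • m = r • m) {S : Set M}
    (h : (span (Module.End R M) S).FG) : (span (Module.End Q M) S).FG := by
  obtain ⟨T, hT⟩ := h
  refine ⟨T, SetLike.coe_injective ?_⟩
  rw [span_end_coe_eq f hf hc, span_end_coe_eq f hf hc, hT]

private theorem fg_QtoR (f : R →+* Q) (hf : Surjective f)
    (hc : ∀ (r : R) (m : M), f r • m = r • m) {S : Set M}
    (h : (span (Module.End Q M) S).FG) : (span (Module.End R M) S).FG := by
  obtain ⟨T, hT⟩ := h
  refine ⟨T, SetLike.coe_injective ?_⟩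
  rw [← span_end_coe_eq f hf hc, ← span_end_coe_eq f hf hc, hT]
end Transfer

section Core
variable {Q M : Type*} [Ring Q] [AddCommGroup M] [Module Q M]

/-- Core of the forward direction: in a simple ring acting faithfully on a simple module and
possessing a minimal left ideal, every element acts with finite rank. -/
private theorem core_fg [IsSimpleModule Q M] [FaithfulSMul Q M] [IsSimpleRing Q]
    {L : Submodule Q Q} (hL : IsAtom L) (q : Q) :
    (span (Module.End Q M) (Set.range fun m : M => q • m)).FG := by
  classical
  letI : DivisionRing (Module.End Q M) := Module.End.instDivisionRing
  -- the set of finite-rank elements is a two-sided ideal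
  let I : TwoSidedIdeal Q := TwoSidedIdeal.mk'
    {x : Q | (span (Module.End Q M) (Set.range fun m : M => x • m)).FG}
    (by
      show (span (Module.End Q M) (Set.range fun m : M => (0 : Q) • m)).FG
      refine fg_of_le_fg (p' := span (Module.End Q M) {0}) ?_ (fg_span_singleton _)
      refine span_mono ?_
      rintro y ⟨m, rfl⟩
      simp)
    (by
      intro x y hx hy
      refine fg_of_le_fg ?_ ((hx : Submodule.FG _).sup hy)
      rw [span_le]
      rintro z ⟨m, rfl⟩
      show (x + y) • m ∈ _
      rw [add_smul]
      exact add_mem (le_sup_left (α := Submodule (Module.End Q M) M)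
          (subset_span ⟨m, rfl⟩))
        (le_sup_right (α := Submodule (Module.End Q M) M) (subset_span ⟨m, rfl⟩)))
    (by
      intro x hx
      refine fg_of_le_fg ?_ (hx : Submodule.FG _)
      rw [span_le]
      rintro z ⟨m, rfl⟩
      show (-x) • m ∈ _
      rw [neg_smul, ← smul_neg]
      exact subset_span ⟨-m, rfl⟩)
    (by
      intro x y hy
      refine fg_of_le_fg (p' := Submodule.map (actHom Q M x)
        (span (Module.End Q M) (Set.range fun m : M => y • m)))
        ?_ ((hy : Submodule.FG _).map _)
      rw [span_le]
      rintro z ⟨m, rfl⟩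
      show (x * y) • m ∈ _
      rw [mul_smul]
      exact mem_map_of_mem (subset_span ⟨m, rfl⟩))
    (by
      intro x y hx
      refine fg_of_le_fg ?_ (hx : Submodule.FG _)
      rw [span_le]
      rintro z ⟨m, rfl⟩
      show (x * y) • m ∈ _
      rw [mul_smul]
      exact subset_span ⟨y • m, rfl⟩)
  -- a nonzero element of the minimal left ideal
  obtain ⟨a₀, ha₀L, ha₀⟩ := Submodule.ne_bot_iff L |>.mp hL.1
  obtain ⟨m₀, hm₀⟩ : ∃ m₀ : M, a₀ • m₀ ≠ 0 := by
    by_contra hcon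
    push_neg at hcon
    exact ha₀ (eq_of_smul_eq_smul (α := M) fun m => by rw [hcon m, zero_smul])
  -- evaluation at m₀ is an isomorphism L ≃ M
  haveI : IsSimpleModule Q L := isSimpleModule_iff_isAtom.mpr hL
  let φ : L →ₗ[Q] M :=
    { toFun := fun a => (a : Q) • m₀
      map_add' := fun a b => add_smul _ _ _
      map_smul' := fun c a => mul_smul _ _ _ }
  have hφ : Bijective φ := by
    refine LinearMap.bijective_of_ne_zero (fun h0 => hm₀ ?_)
    rw [show a₀ • m₀ = φ ⟨a₀, ha₀L⟩ from rfl, h0, LinearMap.zero_apply]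
  let eφ := LinearEquiv.ofBijective φ hφ
  -- every element of L acts with rank at most one
  have hLsub : ∀ a ∈ L, a ∈ I := by
    intro a ha
    rw [TwoSidedIdeal.mem_mk']
    refine fg_of_le_fg (p' := span (Module.End Q M) {a • m₀}) ?_ (fg_span_singleton _)
    rw [span_le]
    rintro z ⟨m, rfl⟩
    show a • m ∈ _
    let ψ : L →ₗ[Q] M :=
      { toFun := fun b => (b : Q) • m
        map_add' := fun b c => add_smul _ _ _
        map_smul' := fun c b => mul_smul _ _ _ }
    let d : Module.End Q M := ψ.comp (eφ.symm : M →ₗ[Q] L)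
    have key : a • m = d (a • m₀) := by
      show a • m = ψ (eφ.symm (a • m₀))
      rw [show a • m₀ = eφ ⟨a, ha⟩ from rfl, LinearEquiv.symm_apply_apply]
      rfl
    rw [key]
    exact (span (Module.End Q M) {a • m₀}).smul_mem d (subset_span rfl)
  -- hence I = ⊤ and q ∈ I
  have h1I : (1 : Q) ∈ I := IsSimpleRing.one_mem_of_ne_zero_mem I ha₀ (hLsub a₀ ha₀L)
  have hqI : q ∈ I := by
    have := I.mul_mem_left q 1 h1I
    rwa [mul_one] at this
  rw [TwoSidedIdeal.mem_mk'] at hqI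
  exact hqI
end Core

section Ann
variable (R M : Type*) [Ring R] [AddCommGroup M] [Module R M]

private def annTwoSided : TwoSidedIdeal R :=
  TwoSidedIdeal.mk' {r : R | ∀ m : M, r • m = 0}
    (fun m => zero_smul R m)
    (fun {x y} hx hy m => by rw [add_smul, hx m, hy m, add_zero])
    (fun {x} hx m => by rw [neg_smul, hx m, neg_zero])
    (fun {x y} hy m => by rw [mul_smul, hy m, smul_zero])
    (fun {x y} hx m => by rw [mul_smul, hx (y • m)])

private theorem mem_annTwoSided {r : R} : r ∈ annTwoSided R M ↔ ∀ m : M, r • m = 0 :=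
  TwoSidedIdeal.mem_mk' _ _ _ _ _ _ r
end Ann

/-! ### The main theorem -/

/-- A ring `R` is CCR if and only if for every simple left `R`-module `M`, every `r ∈ R` acts
on `M` as a finite rank operator over the division ring `D = End_R(M)`; i.e., the
`D`-submodule of `M` generated by `r • M` is a finitely generated `D`-module. -/
theorem isCCRRing_iff_finite_rank (R : Type u) [Ring R] :
    IsCCRRing R ↔
      ∀ (M : Type u) [AddCommGroup M] [Module R M], IsSimpleModule R M →
        ∀ r : R,
          (Submodule.span (Module.End R M) (Set.range fun m : M => r • m)).FG := by
  constructor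
  · -- CCR implies finite rank
    intro hccr M _ _ hsM r
    classical
    haveI := hsM
    set P : TwoSidedIdeal R := annTwoSided R M with hP
    letI : SMul P.ringCon.Quotient M :=
      ⟨fun q m => Quotient.liftOn q (fun r => r • m) fun a b h => by
        have h1 : a - b ∈ P := (TwoSidedIdeal.rel_iff _ _ _).mp h
        have h2 := (mem_annTwoSided R M).mp h1 m
        rw [sub_smul, sub_eq_zero] at h2
        exact h2⟩
    letI : Module P.ringCon.Quotient M :=
      { smul := (· • ·)
        one_smul := fun m => one_smul R m
        mul_smul := fun a b m => Quotient.inductionOn₂ a b fun a b => mul_smul a b m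
        smul_zero := fun a => Quotient.inductionOn a fun a => smul_zero a
        smul_add := fun a m n => Quotient.inductionOn a fun a => smul_add a m n
        add_smul := fun a b m => Quotient.inductionOn₂ a b fun a b => add_smul a b m
        zero_smul := fun m => zero_smul R m }
    have hc : ∀ (r' : R) (m : M), (RingCon.mk' P.ringCon) r' • m = r' • m := fun _ _ => rfl
    have hf : Surjective (RingCon.mk' P.ringCon) := fun q =>
      Quotient.inductionOn q fun r' => ⟨r', rfl⟩
    haveI : FaithfulSMul P.ringCon.Quotient M := by
      constructor
      intro q1 q2 h
      induction q1 using Quotient.inductionOn with | h a =>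
      induction q2 using Quotient.inductionOn with | h b =>
      apply Quotient.sound
      show P.ringCon a b
      rw [TwoSidedIdeal.rel_iff, hP]
      rw [mem_annTwoSided]
      intro m
      rw [sub_smul, sub_eq_zero]
      exact h m
    haveI hsQ : IsSimpleModule P.ringCon.Quotient M :=
      isSimpleModule_RtoQ (RingCon.mk' P.ringCon) hc
    have hprim : IsPrimitiveRing P.ringCon.Quotient :=
      ⟨M, inferInstance, inferInstance, hsQ, inferInstance⟩
    obtain ⟨hsimple, L, hL⟩ := hccr P hprim
    haveI := hsimple
    have hcore := core_fg (M := M) hL ((RingCon.mk' P.ringCon) r)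
    have hrange : (Set.range fun m : M => (RingCon.mk' P.ringCon) r • m) =
        (Set.range fun m : M => r • m) :=
      congrArg Set.range (funext fun m => hc r m)
    rw [hrange] at hcore
    exact fg_QtoR (RingCon.mk' P.ringCon) hf hc hcore
  · -- finite rank implies CCR
    intro h P hprim
    classical
    obtain ⟨M, hAG, hMod, hsQ, hfaith⟩ := hprim
    letI := hAG
    letI := hMod
    haveI := hsQ
    haveI := hfaith
    let f : R →+* P.ringCon.Quotient := RingCon.mk' P.ringCon
    letI : Module R M := Module.compHom M f
    have hc : ∀ (r : R) (m : M), f r • m = r • m := fun _ _ => rfl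
    have hf : Surjective f := fun q => Quotient.inductionOn q fun r => ⟨r, rfl⟩
    haveI hsR : IsSimpleModule R M := isSimpleModule_QtoR f hf hc
    have h1 := h M hsR 1
    have hrange : (Set.range fun m : M => (1 : R) • m) = (Set.univ : Set M) :=
      Set.eq_univ_of_forall fun m => ⟨m, one_smul R m⟩
    rw [hrange] at h1
    have h1Q : (span (Module.End P.ringCon.Quotient M) (Set.univ : Set M)).FG :=
      fg_RtoQ f hf hc h1
    rw [span_univ] at h1Q
    haveI : Nontrivial M := IsSimpleModule.nontrivial P.ringCon.Quotient M
    letI : DivisionRing (Module.End P.ringCon.Quotient M) := Module.End.instDivisionRing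
    haveI : Module.Finite (Module.End P.ringCon.Quotient M) M := ⟨h1Q⟩
    have hbij := actHom_bijective (Q := P.ringCon.Quotient) (M := M) h1Q
    let e := RingEquiv.ofBijective (actHom P.ringCon.Quotient M) hbij
    haveI : IsSimpleRing (Module.End (Module.End P.ringCon.Quotient M) M) := end_isSimpleRing
    exact ⟨isSimpleRing_of_ringEquiv e,
      hasMinimalLeftIdeal_of_ringEquiv e end_hasMinimalLeftIdeal⟩
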